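/- Let (A, B) be a separating pair of continuous aggregation functions on [0,1]². Then the map ϱ_{A,B} is admissible with the linear order ≤_{A,B}: for all α, β, γ ∈ Ĩ with α ≤_{A,B} β ≤_{A,B} γ, one has ϱ_{A,B}(α, β) ≤ ϱ_{A,B}(α, γ) and ϱ_{A,B}(β, γ) ≤ ϱ_{A,B}(α, γ). -/
import Mathlib


/-- The set of intuitionistic fuzzy values (IFVs). -/
def Itilde : Set (ℝ × ℝ) :=
  {p | 0 ≤ p.1 ∧ p.1 ≤ 1 ∧ 0 ≤ p.2 ∧ p.2 ≤ 1 ∧ p.1 + p.2 ≤ 1}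

/-- An aggregation function on `[0,1]²`. -/
structure IsAggregation (A : ℝ → ℝ → ℝ) : Prop where
  mapsTo : ∀ x y, x ∈ Set.Icc (0 : ℝ) 1 → y ∈ Set.Icc (0 : ℝ) 1 →
    A x y ∈ Set.Icc (0 : ℝ) 1
  mono_left : ∀ x₁ x₂ y, x₁ ∈ Set.Icc (0 : ℝ) 1 → x₂ ∈ Set.Icc (0 : ℝ) 1 →
    y ∈ Set.Icc (0 : ℝ) 1 → x₁ ≤ x₂ → A x₁ y ≤ A x₂ y
  mono_right : ∀ x y₁ y₂, x ∈ Set.Icc (0 : ℝ) 1 → y₁ ∈ Set.Icc (0 : ℝ) 1 →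
    y₂ ∈ Set.Icc (0 : ℝ) 1 → y₁ ≤ y₂ → A x y₁ ≤ A x y₂
  zero : A 0 0 = 0
  one : A 1 1 = 1

/-- `Ā(α) = A(μ_α, 1 - ν_α)`. -/
def aggBar (A : ℝ → ℝ → ℝ) (p : ℝ × ℝ) : ℝ := A p.1 (1 - p.2)

/-- The order `≤_{A,B}` on IFVs. -/
def abLE (A B : ℝ → ℝ → ℝ) (a b : ℝ × ℝ) : Prop :=
  aggBar A a < aggBar A b ∨ (aggBar A a = aggBar A b ∧ aggBar B a ≤ aggBar B b)

/-- The distance measure `ϱ_{A,B}`. -/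
noncomputable def vrhoAB (A B : ℝ → ℝ → ℝ) (a b : ℝ × ℝ) : ℝ :=
  if aggBar A a ≠ aggBar A b then (1 + |aggBar A a - aggBar A b|) / 2
  else |aggBar B a - aggBar B b| / 2

/-- For a separating pair `(A, B)` of continuous aggregation functions,
`ϱ_{A,B}` is admissible with the linear order `≤_{A,B}`. -/
theorem vrhoAB_admissible (A B : ℝ → ℝ → ℝ)
    (hA : IsAggregation A) (hB : IsAggregation B)
    (hAc : ContinuousOn (fun p : ℝ × ℝ => A p.1 p.2)
      (Set.Icc (0 : ℝ) 1 ×ˢ Set.Icc (0 : ℝ) 1))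
    (hBc : ContinuousOn (fun p : ℝ × ℝ => B p.1 p.2)
      (Set.Icc (0 : ℝ) 1 ×ˢ Set.Icc (0 : ℝ) 1))
    (hsep : ∀ x₁ y₁ x₂ y₂, x₁ ∈ Set.Icc (0 : ℝ) 1 → y₁ ∈ Set.Icc (0 : ℝ) 1 →
      x₂ ∈ Set.Icc (0 : ℝ) 1 → y₂ ∈ Set.Icc (0 : ℝ) 1 →
      A x₁ y₁ = A x₂ y₂ → B x₁ y₁ = B x₂ y₂ → x₁ = x₂ ∧ y₁ = y₂)
    (a b c : ℝ × ℝ) (ha : a ∈ Itilde) (hb : b ∈ Itilde) (hc : c ∈ Itilde)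
    (hab : abLE A B a b) (hbc : abLE A B b c) :
    vrhoAB A B a b ≤ vrhoAB A B a c ∧ vrhoAB A B b c ≤ vrhoAB A B a c := by
  obtain ⟨ha1, ha2, ha3, ha4, ha5⟩ := ha
  obtain ⟨hb1, hb2, hb3, hb4, hb5⟩ := hb
  obtain ⟨hc1, hc2, hc3, hc4, hc5⟩ := hc
  have hBa : aggBar B a ∈ Set.Icc (0:ℝ) 1 :=
    hB.mapsTo _ _ ⟨ha1, ha2⟩ ⟨by linarith, by linarith⟩
  have hBb : aggBar B b ∈ Set.Icc (0:ℝ) 1 :=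
    hB.mapsTo _ _ ⟨hb1, hb2⟩ ⟨by linarith, by linarith⟩
  have hBc' : aggBar B c ∈ Set.Icc (0:ℝ) 1 :=
    hB.mapsTo _ _ ⟨hc1, hc2⟩ ⟨by linarith, by linarith⟩
  have hab' : aggBar A a ≤ aggBar A b := by
    rcases hab with h | ⟨h, _⟩ <;> [exact h.le; exact h.le]
  have hbc' : aggBar A b ≤ aggBar A c := by
    rcases hbc with h | ⟨h, _⟩ <;> [exact h.le; exact h.le]
  have hB1 : aggBar A a = aggBar A b → aggBar B a ≤ aggBar B b := by
    intro h1
    rcases hab with h | ⟨_, h⟩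
    · linarith
    · exact h
  have hB2 : aggBar A b = aggBar A c → aggBar B b ≤ aggBar B c := by
    intro h2
    rcases hbc with h | ⟨_, h⟩
    · linarith
    · exact h
  unfold vrhoAB
  rcases eq_or_lt_of_le hab' with h1 | h1 <;> rcases eq_or_lt_of_le hbc' with h2 | h2
  · have hac : aggBar A a = aggBar A c := h1.trans h2
    have hb1 := hB1 h1
    have hb2 := hB2 h2
    rw [if_neg (show ¬ aggBar A a ≠ aggBar A b by simp [h1]),
      if_neg (show ¬ aggBar A a ≠ aggBar A c by simp [hac]),
      if_neg (show ¬ aggBar A b ≠ aggBar A c by simp [h2])]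
    rw [abs_of_nonpos (by linarith), abs_of_nonpos (by linarith),
      abs_of_nonpos (by linarith)]
    constructor <;> linarith
  · have hac : aggBar A a < aggBar A c := h1 ▸ h2
    have hb1 := hB1 h1
    rw [if_neg (by simp [h1]), if_pos hac.ne, if_pos h2.ne]
    constructor
    · rw [abs_of_nonpos (by linarith), abs_of_nonpos (by linarith)]
      linarith [hBa.1, hBb.2]
    · rw [h1]
  · have hac : aggBar A a < aggBar A c := h1.trans_le h2.le
    have hb2 := hB2 h2
    rw [if_pos h1.ne, if_pos hac.ne, if_neg (by simp [h2])]
    constructor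
    · rw [h2]
    · rw [abs_of_nonpos (by linarith), abs_of_nonpos (by linarith)]
      linarith [hBb.1, hBc'.2]
  · have hac : aggBar A a < aggBar A c := h1.trans h2
    rw [if_pos h1.ne, if_pos hac.ne, if_pos h2.ne]
    rw [abs_of_nonpos (by linarith), abs_of_nonpos (by linarith),
      abs_of_nonpos (by linarith)]
    constructor <;> linarith
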